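/- Let m, n be natural numbers with n ≤ m and m + n > 0. Let B be the set of lists of Booleans containing exactly m values true and n values false such that in every nonempty prefix the number of true entries strictly exceeds the number of false entries. Then (m + n) · |B| = (m − n) · binom(m + n, m). (Counting form of Bertrand's ballot theorem, 1887: the proportion of vote orderings in which the winning candidate with m votes always strictly leads the candidate with n votes is (m−n)/(m+n).) -/

import Mathlib

def BS (m n : ℕ) : Set (List Bool) :=
  {l : List Bool | l.count true = m ∧ l.count false = n ∧
    ∀ j : ℕ, 1 ≤ j → j ≤ l.length →
      (l.take j).count false < (l.take j).count true}

lemma count_tf (l : List Bool) : l.count true + l.count false = l.length := by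
  induction l with
  | nil => simp
  | cons b t ih => cases b <;> simp [List.count_cons] <;> omega

lemma BS_len {m n : ℕ} {l : List Bool} (h : l ∈ BS m n) : l.length = m + n := by
  obtain ⟨h1, h2, _⟩ := h
  have := count_tf l
  omega

lemma BS_finite (m n : ℕ) : (BS m n).Finite :=
  (List.finite_length_eq Bool (m + n)).subset fun l hl => BS_len hl

lemma BS_zero (m : ℕ) : BS m 0 = {List.replicate m true} := by
  ext l
  constructor
  · rintro ⟨h1, h2, _⟩
    have hmem : ∀ b ∈ l, b = true := by
      intro b hb
      cases b
      · exact absurd hb (List.count_eq_zero.mp h2)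
      · rfl
    have : l.length = m := by have := count_tf l; omega
    exact Set.mem_singleton_iff.mpr (List.eq_replicate_iff.mpr ⟨this, hmem⟩)
  · rintro rfl
    refine ⟨by simp, by simp [List.count_replicate], fun j hj hjl => ?_⟩
    rw [List.take_replicate]
    simp only [List.length_replicate] at hjl
    simp only [List.count_replicate]
    simp
    omega

lemma BS_diag {m : ℕ} (hm : 0 < m) : BS m m = ∅ := by
  ext l
  simp only [Set.mem_empty_iff_false, iff_false]
  rintro ⟨h1, h2, h3⟩
  have hl : l.length = m + m := BS_len ⟨h1, h2, h3⟩
  have := h3 l.length (by omega) le_rfl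
  rw [List.take_length] at this
  omega

lemma BS_rec {m n : ℕ} (hn : 1 ≤ n) (hnm : n < m) :
    BS m n = (· ++ [true]) '' BS (m - 1) n ∪ (· ++ [false]) '' BS m (n - 1) := by
  ext l
  constructor
  · intro hl
    obtain ⟨h1, h2, h3⟩ := hl
    have hlen : l.length = m + n := BS_len ⟨h1, h2, h3⟩
    rcases l.eq_nil_or_concat with rfl | ⟨l', b, hcon⟩
    · simp at hlen; omega
    rw [List.concat_eq_append] at hcon
    subst hcon
    have hlen' : l'.length = m + n - 1 := by simp at hlen; omega
    have hc1 : l'.count true + List.count true [b] = m := by rw [← List.count_append]; exact h1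
    have hc2 : l'.count false + List.count false [b] = n := by rw [← List.count_append]; exact h2
    have h3' : ∀ j : ℕ, 1 ≤ j → j ≤ l'.length →
        (l'.take j).count false < (l'.take j).count true := by
      intro j hj hjl
      have := h3 j hj (by simp; omega)
      rwa [List.take_append_of_le_length hjl] at this
    cases b
    · right
      exact ⟨l', ⟨by simpa using hc1, by simp at hc2; omega, h3'⟩, rfl⟩
    · left
      exact ⟨l', ⟨by simp at hc1; omega, by simpa using hc2, h3'⟩, rfl⟩
  · rintro (⟨l', ⟨h1, h2, h3⟩, rfl⟩ | ⟨l', ⟨h1, h2, h3⟩, rfl⟩) <;> dsimp only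
    · have hlen : l'.length = m - 1 + n := BS_len ⟨h1, h2, h3⟩
      have hct : (l' ++ [true]).count true = m := by
        rw [List.count_append]; simp; omega
      have hcf' : (l' ++ [true]).count false = n := by
        rw [List.count_append]; simp; omega
      refine ⟨hct, hcf', fun j hj hjl => ?_⟩
      rcases le_or_gt j l'.length with hle | hgt
      · rw [List.take_append_of_le_length hle]
        exact h3 j hj hle
      · rw [List.take_of_length_le (show (l' ++ [true]).length ≤ j by simp; omega)]
        omega
    · have hlen : l'.length = m + (n - 1) := BS_len ⟨h1, h2, h3⟩
      have hcf : (l' ++ [false]).count false = n := by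
        rw [List.count_append]; simp; omega
      have hct' : (l' ++ [false]).count true = m := by
        rw [List.count_append]; simp; omega
      refine ⟨hct', hcf, fun j hj hjl => ?_⟩
      rcases le_or_gt j l'.length with hle | hgt
      · rw [List.take_append_of_le_length hle]
        exact h3 j hj hle
      · rw [List.take_of_length_le (show (l' ++ [false]).length ≤ j by simp; omega)]
        omega

lemma BS_card_rec {m n : ℕ} (hn : 1 ≤ n) (hnm : n < m) :
    (BS m n).ncard = (BS (m - 1) n).ncard + (BS m (n - 1)).ncard := by
  rw [BS_rec hn hnm]
  have hinj : ∀ b : Bool, Function.Injective (fun l : List Bool => l ++ [b]) := by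
    intro b l1 l2 h
    simpa using h
  rw [Set.ncard_union_eq ?_ (((BS_finite _ _).image _))
      (((BS_finite _ _).image _)),
    Set.ncard_image_of_injective _ (hinj true), Set.ncard_image_of_injective _ (hinj false)]
  rw [Set.disjoint_left]
  rintro l ⟨l1, _, rfl⟩ ⟨l2, _, h⟩
  have := congrArg (fun l : List Bool => l.getLast?) h
  simp at this

lemma ballot_arith (n m C1 C2 : ℕ) (hn : 1 ≤ n) (hm : n < m) (hid : m * C2 = n * C1) :
    (m + n) * ((m - 1 - n) * C1 + (m - (n - 1)) * C2)
      = (m + n - 1) * ((m - n) * (C1 + C2)) := by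
  have hid' : (m : ℤ) * C2 = n * C1 := by exact_mod_cast hid
  zify [show 1 ≤ m + n by omega, show n ≤ m - 1 by omega, show 1 ≤ m by omega,
    show n - 1 ≤ m by omega, hn, hm.le]
  linear_combination 2 * hid'

lemma key : ∀ m n : ℕ, n ≤ m → 0 < m + n →
    (m + n) * (BS m n).ncard = (m - n) * Nat.choose (m + n) m := by
  intro m
  induction m with
  | zero => intro n h1 h2; omega
  | succ M ihM =>
    intro n
    induction n with
    | zero =>
      intro _ _
      rw [BS_zero, Set.ncard_singleton]
      simp [Nat.choose_self]
    | succ N ihN =>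
      intro hnm hpos
      rcases eq_or_lt_of_le hnm with heq | hlt
      · rw [← heq, BS_diag (by omega)]
        simp
      · set m := M + 1
        set n := N + 1
        have hrec := BS_card_rec (m := m) (n := n) (by omega) hlt
        have ih1 : (m - 1 + n) * (BS (m - 1) n).ncard
            = (m - 1 - n) * Nat.choose (m - 1 + n) (m - 1) := by
          have : m - 1 = M := by omega
          rw [this]
          exact ihM n (by omega) (by omega)
        have ih2 : (m + (n - 1)) * (BS m (n - 1)).ncard
            = (m - (n - 1)) * Nat.choose (m + (n - 1)) m := by
          have : n - 1 = N := by omega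
          rw [this]
          exact ihN (by omega) (by omega)
        set a := (BS (m - 1) n).ncard
        set b := (BS m (n - 1)).ncard
        rw [hrec]
        set C1 := Nat.choose (m - 1 + n) (m - 1) with hC1
        set C2 := Nat.choose (m + (n - 1)) m with hC2
        have hpascal : Nat.choose (m + n) m = C1 + C2 := by
          have h1 : m + n = (m - 1 + n) + 1 := by omega
          have h2 : m = (m - 1) + 1 := by omega
          rw [h1, h2, Nat.choose_succ_succ']
          congr 2 <;> omega
        have hid : m * C2 = n * C1 := by
          have h := Nat.choose_succ_right_eq (m - 1 + n) (m - 1)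
          have e1 : m - 1 + 1 = m := by omega
          have e2 : m - 1 + n - (m - 1) = n := by omega
          have e3 : m + (n - 1) = m - 1 + n := by omega
          rw [e1, e2] at h
          rw [hC2, hC1, e3, mul_comm, h, mul_comm]
        -- now the arithmetic
        have hcancel : 0 < m + n - 1 := by omega
        apply Nat.eq_of_mul_eq_mul_left hcancel
        rw [hpascal]
        have e4 : m - 1 + n = m + n - 1 := by omega
        rw [e4] at ih1
        have e5 : m + (n - 1) = m + n - 1 := by omega
        rw [e5] at ih2
        have expand : (m + n - 1) * ((m + n) * (a + b))
            = (m + n) * ((m + n - 1) * a + (m + n - 1) * b) := by ring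
        rw [expand, ih1, ih2]
        exact ballot_arith n m C1 C2 (by omega) hlt hid

theorem ballot_bertrand (m n : ℕ) (hnm : n ≤ m) (hpos : 0 < m + n) :
    (m + n) * {l : List Bool | l.count true = m ∧ l.count false = n ∧
        ∀ j : ℕ, 1 ≤ j → j ≤ l.length →
          (l.take j).count false < (l.take j).count true}.ncard
      = (m - n) * Nat.choose (m + n) m := by
  exact key m n hnm hpos
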